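/- arXiv:2604.17394 — 2 statements merged into one kernel-verified Lean document; each statement's English description precedes it below -/
import Mathlib

section
/- Let Q be an integral (cancellative) commutative monoid such that its sharpification Q̄ = Q/Q^× is finitely generated and saturated. Then the canonical surjection π: Q → Q̄ admits a monoid section s: Q̄ → Q with π ∘ s = id. -/
open scoped TensorProduct

/-- The polynomial `P(X,Y) = ((X+Y)^p - X^p - Y^p)/p` evaluated at `a, b`. -/
def fwP {R : Type*} [CommRing R] (p : ℕ) (a b : R) : R :=
  ∑ i ∈ Finset.Ioo 0 p, (Nat.choose p i / p : ℕ) • (a ^ i * b ^ (p - i))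

/-- A Frobenius–Witt derivation. -/
structure IsFWDerivation {R M : Type*} [CommRing R] [AddCommGroup M] [Module R M]
    (p : ℕ) (D : R → M) : Prop where
  map_add' : ∀ a b : R, D (a + b) = D a + D b - fwP p a b • D (p : R)
  map_mul' : ∀ a b : R, D (a * b) = b ^ p • D a + a ^ p • D b

/-- A logarithmic Frobenius–Witt derivation of the prelog ring `(R, Q, α)`. -/
structure IsLogFWDerivation {R M Q : Type*} [CommRing R] [AddCommGroup M] [Module R M]
    [CommMonoid Q] (p : ℕ) (α : Q →* R) (D : R → M) (δ : Q → M) : Prop where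
  toFW : IsFWDerivation p D
  map_one' : δ 1 = 0
  map_mul' : ∀ x y : Q, δ (x * y) = δ x + δ y
  compat : ∀ x : Q, D (α x) = α x ^ p • δ x

/-- The congruence on `Q` identifying elements differing by a unit;
its quotient is the sharpification `Q̄ = Q/Q^×`. -/
def sharpCon (Q : Type*) [CommMonoid Q] : Con Q where
  r x y := ∃ u : Qˣ, x = y * u
  iseqv := by
    refine ⟨fun x => ⟨1, by simp⟩, ?_, ?_⟩
    · rintro x y ⟨u, rfl⟩; exact ⟨u⁻¹, by simp⟩
    · rintro x y z ⟨u, rfl⟩ ⟨v, rfl⟩; exact ⟨v * u, by rw [Units.val_mul, mul_assoc]⟩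
  mul' := by
    rintro a b c d ⟨u, rfl⟩ ⟨v, rfl⟩
    exact ⟨u * v, by rw [Units.val_mul]; exact mul_mul_mul_comm b u d v⟩

/-- An ideal of a commutative monoid. -/
def IsMonIdeal {Q : Type*} [CommMonoid Q] (I : Set Q) : Prop :=
  ∀ a x : Q, x ∈ I → a * x ∈ I

/-- A prime ideal of a commutative monoid: an ideal whose complement is a submonoid. -/
def IsPrimeMonIdeal {Q : Type*} [CommMonoid Q] (I : Set Q) : Prop :=
  IsMonIdeal I ∧ (1 : Q) ∉ I ∧ ∀ x y : Q, x * y ∈ I → x ∈ I ∨ y ∈ I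

/-- The dimension of a commutative monoid: the Krull dimension of its poset of prime ideals. -/
noncomputable def monDim (Q : Type*) [CommMonoid Q] : WithBot (WithTop ℕ) :=
  Order.krullDim {I : Set Q // IsPrimeMonIdeal I}

/-- A commutative monoid is integral (cancellative). -/
def IsIntegralMon (Q : Type*) [CommMonoid Q] : Prop :=
  ∀ a b c : Q, a * b = a * c → b = c

/-- A commutative monoid is saturated: it is integral and whenever `x ∈ Q^{gp}` satisfies
`x^n ∈ Q` for some `n > 0`, then `x ∈ Q`; intrinsically, `a^n ∣ b^n → a ∣ b`. -/
def IsSaturatedMon (Q : Type*) [CommMonoid Q] : Prop :=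
  IsIntegralMon Q ∧ ∀ (a b : Q) (n : ℕ), 0 < n → a ^ n ∣ b ^ n → a ∣ b

/-- A commutative monoid is sharp if its only unit is `1`. -/
def IsSharpMon (Q : Type*) [CommMonoid Q] : Prop :=
  ∀ x : Q, IsUnit x → x = 1

/-- The ideal `I_α` of a prelog ring `(R, Q, α)`, generated by `α(Q⁺)`. -/
def prelogIdeal {R Q : Type*} [CommRing R] [CommMonoid Q] (α : Q →* R) : Ideal R :=
  Ideal.span (α '' {x : Q | ¬ IsUnit x})

/-- A Noetherian local ring is regular: its maximal ideal (= the ideal of nonunits) is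
generated by `dim R` elements. -/
def IsRegularLocal (S : Type*) [CommRing S] : Prop :=
  IsNoetherianRing S ∧ IsLocalRing S ∧
    ∃ (n : ℕ) (s : Fin n → S),
      Ideal.span (Set.range s) = Ideal.span {x : S | ¬ IsUnit x} ∧
      ringKrullDim S = (n : WithBot (WithTop ℕ))

/-- Log regularity of a local prelog ring `(R, Q, α)`. -/
def IsLogRegular {R Q : Type*} [CommRing R] [CommMonoid Q] (α : Q →* R) : Prop :=
  IsRegularLocal (R ⧸ prelogIdeal α) ∧
    ringKrullDim R = ringKrullDim (R ⧸ prelogIdeal α) + (show WithBot ℕ∞ from monDim Q)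


section GroupCompletionAux

open Localization

variable {M N : Type*} [CommMonoid M] [CommMonoid N]

/-- The group completion of a commutative monoid, as `Localization ⊤`. -/
abbrev GC (M : Type*) [CommMonoid M] : Type _ := Localization (⊤ : Submonoid M)

noncomputable instance GC.commGroup : CommGroup (GC M) :=
  { (inferInstance : CommMonoid (Localization (⊤ : Submonoid M))) with
    inv := fun x => Localization.liftOn x
      (fun a b => Localization.mk (b : M) ⟨a, Submonoid.mem_top _⟩)
      (by
        intro a c b d h
        rw [Localization.r_iff_exists] at h
        obtain ⟨e, he⟩ := h
        rw [Localization.mk_eq_mk_iff, Localization.r_iff_exists]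
        exact ⟨e, by
          simp only [Submonoid.coe_mul]
          rw [mul_comm (c : M) (b : M), mul_comm (a : M) (d : M)]
          exact he.symm⟩)
    inv_mul_cancel := fun x => by
      induction x using Localization.ind with
      | _ y =>
        obtain ⟨a, b⟩ := y
        show Localization.mk (b : M) ⟨a, Submonoid.mem_top _⟩ * Localization.mk a b = 1
        rw [Localization.mk_mul]
        rw [show ((b : M) * a) = ((⟨a, Submonoid.mem_top _⟩ * b : (⊤ : Submonoid M)) : M) by
          simp [mul_comm]]
        exact Localization.mk_self _ }

/-- The canonical map into the group completion. -/
noncomputable def gcI (M : Type*) [CommMonoid M] : M →* GC M where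
  toFun a := Localization.mk a 1
  map_one' := Localization.mk_one
  map_mul' a b := by rw [Localization.mk_mul, mul_one]

theorem gcI_apply (a : M) : gcI M a = Localization.mk a 1 := rfl

/-- Functoriality of the group completion. -/
noncomputable def gcMap (f : M →* N) : GC M →* GC N where
  toFun x := Localization.liftOn x
    (fun a b => Localization.mk (f a) ⟨f b, Submonoid.mem_top _⟩)
    (by
      intro a c b d h
      rw [Localization.r_iff_exists] at h
      obtain ⟨e, he⟩ := h
      rw [Localization.mk_eq_mk_iff, Localization.r_iff_exists]
      refine ⟨⟨f e, Submonoid.mem_top _⟩, ?_⟩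
      have := congrArg f he
      simpa only [map_mul] using this)
  map_one' := by
    rw [show (1 : GC M) = Localization.mk 1 1 from Localization.mk_one.symm]
    show Localization.mk (f 1) ⟨f ((1 : (⊤ : Submonoid M)) : M), Submonoid.mem_top _⟩ =
      (1 : GC N)
    rw [show (1 : GC N) = Localization.mk 1 1 from Localization.mk_one.symm,
      Localization.mk_eq_mk_iff, Localization.r_iff_exists]
    exact ⟨1, by simp⟩
  map_mul' x y := by
    induction x using Localization.ind with
    | _ p =>
    induction y using Localization.ind with
    | _ q =>
      obtain ⟨a, b⟩ := p
      obtain ⟨c, d⟩ := q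
      dsimp only
      rw [Localization.mk_mul]
      show Localization.mk (f (a * c))
          ⟨f ((b * d : (⊤ : Submonoid M)) : M), Submonoid.mem_top _⟩ =
        Localization.mk (f a) ⟨f b, Submonoid.mem_top _⟩ *
          Localization.mk (f c) ⟨f d, Submonoid.mem_top _⟩
      rw [Localization.mk_mul, Localization.mk_eq_mk_iff, Localization.r_iff_exists]
      exact ⟨1, by simp [map_mul, Submonoid.coe_mul, mul_comm, mul_left_comm]⟩

theorem gcMap_mk (f : M →* N) (a : M) (b : (⊤ : Submonoid M)) :
    gcMap f (Localization.mk a b) = Localization.mk (f a) ⟨f b, Submonoid.mem_top _⟩ := rfl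

theorem gc_mk_decomp (a : M) (b : (⊤ : Submonoid M)) :
    Localization.mk a b = gcI M a * (gcI M (b : M))⁻¹ := by
  show Localization.mk a b =
    Localization.mk a 1 * Localization.mk ((1 : (⊤ : Submonoid M)) : M) ⟨(b : M), Submonoid.mem_top _⟩
  rw [Localization.mk_mul]
  norm_num

theorem gcI_injective (hM : IsIntegralMon M) : Function.Injective (gcI M) := by
  intro a b h
  rw [gcI_apply, gcI_apply, Localization.mk_eq_mk_iff, Localization.r_iff_exists] at h
  obtain ⟨c, hc⟩ := h
  simp only [OneMemClass.coe_one, one_mul] at hc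
  exact hM c a b hc

end GroupCompletionAux

/-- if `Q` is integral and its sharpification is finitely generated and
saturated, the canonical surjection `π : Q → Q̄` admits a monoid section. -/
theorem stmt1 {Q : Type*} [CommMonoid Q] (hint : IsIntegralMon Q)
    (hfg : Monoid.FG (sharpCon Q).Quotient)
    (hsat : IsSaturatedMon (sharpCon Q).Quotient) :
    ∃ s : (sharpCon Q).Quotient →* Q,
      ((sharpCon Q).mk').comp s = MonoidHom.id (sharpCon Q).Quotient := by
  classical
  set C := (sharpCon Q).Quotient with hC
  have hintC : IsIntegralMon C := hsat.1
  set π : Q →* C := (sharpCon Q).mk' with hπ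
  have hπsurj : Function.Surjective π := Con.mk'_surjective
  have hsharp : ∀ x : C, IsUnit x → x = 1 := by
    intro x hx
    obtain ⟨u, rfl⟩ := hx
    obtain ⟨q, hq⟩ := hπsurj (u : C)
    obtain ⟨r, hr⟩ := hπsurj ((u⁻¹ : Cˣ) : C)
    have h1 : π (q * r) = 1 := by rw [map_mul, hq, hr]; exact u.mul_inv
    have h1' : (sharpCon Q) (q * r) 1 := by
      have := h1
      rwa [show π (q * r) = ((q * r : Q) : C) from rfl,
        show (1 : C) = ((1 : Q) : C) from rfl, (sharpCon Q).eq] at this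
    obtain ⟨v, hv⟩ := h1'
    have hqunit : IsUnit q := by
      refine IsUnit.of_mul_eq_one (a := q) (r * (v⁻¹ : Qˣ)) ?_
      rw [← mul_assoc, hv, one_mul, Units.mul_inv]
    obtain ⟨w, rfl⟩ := hqunit
    have hw : ((w : Q) : C) = ((1 : Q) : C) := ((sharpCon Q).eq).mpr ⟨w, (one_mul _).symm⟩
    rw [← hq]
    exact hw.trans (map_one π)
  set Φ : GC Q →* GC C := gcMap π with hΦ
  have hΦι : ∀ q : Q, Φ (gcI Q q) = gcI C (π q) := by
    intro q
    rw [gcI_apply, hΦ, gcMap_mk, gcI_apply, Localization.mk_eq_mk_iff,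
      Localization.r_iff_exists]
    exact ⟨1, by simp⟩
  have hΦsurj : Function.Surjective Φ := by
    intro h
    induction h using Localization.ind with
    | _ p =>
      obtain ⟨c, d⟩ := p
      obtain ⟨x, hx⟩ := hπsurj c
      obtain ⟨y, hy⟩ := hπsurj (d : C)
      refine ⟨Localization.mk x ⟨y, Submonoid.mem_top _⟩, ?_⟩
      rw [hΦ, gcMap_mk, Localization.mk_eq_mk_iff, Localization.r_iff_exists]
      exact ⟨1, by simp [hx, hy, mul_comm]⟩
  have hker : ∀ g : GC Q, Φ g = 1 → ∃ u : Qˣ, g = gcI Q (u : Q) := by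
    intro g hg
    induction g using Localization.ind with
    | _ p =>
      obtain ⟨a, b⟩ := p
      rw [hΦ, gcMap_mk, ← Localization.mk_one, Localization.mk_eq_mk_iff,
        Localization.r_iff_exists] at hg
      obtain ⟨c, hc⟩ := hg
      simp only [OneMemClass.coe_one, one_mul, mul_one] at hc
      obtain ⟨z, hz⟩ := hπsurj (c : C)
      have hc' : π (z * a) = π (z * (b : Q)) := by
        rw [map_mul, map_mul, hz]; exact hc
      have hc'' : (sharpCon Q) (z * a) (z * (b : Q)) := by
        rwa [show π (z * a) = ((z * a : Q) : C) from rfl,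
          show π (z * (b : Q)) = ((z * (b : Q) : Q) : C) from rfl, (sharpCon Q).eq] at hc'
      obtain ⟨u, hu⟩ := hc''
      have ha : a = (b : Q) * (u : Q) := hint z a ((b : Q) * (u : Q)) (by
        rw [hu, mul_assoc])
      refine ⟨u, ?_⟩
      rw [ha, gcI_apply, Localization.mk_eq_mk_iff, Localization.r_iff_exists]
      exact ⟨1, by simp [mul_comm, mul_left_comm]⟩
  have hGfg : Group.FG (GC C) := by
    obtain ⟨S, hScl, hSfin⟩ := Monoid.fg_iff.mp hfg
    rw [Group.fg_iff]
    refine ⟨gcI C '' S, ?_, hSfin.image _⟩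
    rw [eq_top_iff]
    intro x _
    induction x using Localization.ind with
    | _ p =>
      obtain ⟨a, b⟩ := p
      have hmem : ∀ c : C, gcI C c ∈ Subgroup.closure (gcI C '' S) := by
        intro c
        have hc : c ∈ Submonoid.closure S := hScl ▸ Submonoid.mem_top c
        induction hc using Submonoid.closure_induction with
        | mem s hs => exact Subgroup.subset_closure ⟨s, hs, rfl⟩
        | one => rw [map_one]; exact one_mem _
        | mul s t _ _ hst htt => rw [map_mul]; exact mul_mem hst htt
      rw [gc_mk_decomp]
      exact mul_mem (hmem a) (inv_mem (hmem (b : C)))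
  have htf : ∀ (y : GC C) (m : ℕ), 0 < m → y ^ m = 1 → y = 1 := by
    intro y m hm hym
    induction y using Localization.ind with
    | _ p =>
      obtain ⟨a, b⟩ := p
      rw [Localization.mk_pow, ← Localization.mk_one, Localization.mk_eq_mk_iff,
        Localization.r_iff_exists] at hym
      obtain ⟨c, hc⟩ := hym
      simp only [OneMemClass.coe_one, one_mul, mul_one] at hc
      have hab : a ^ m = (b : C) ^ m := hintC c (a ^ m) ((b : C) ^ m) (by
        rw [hc]; rfl)
      have h1 : a ∣ (b : C) := hsat.2 a (b : C) m hm (hab ▸ dvd_refl _)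
      have h2 : (b : C) ∣ a := hsat.2 (b : C) a m hm (hab ▸ dvd_refl _)
      obtain ⟨s, hs⟩ := h1
      obtain ⟨t, ht⟩ := h2
      have hst : s * t = 1 := by
        have hts : a * 1 = a * (s * t) := by
          rw [mul_one, ← mul_assoc, ← hs, ← ht]
        exact (hintC a 1 (s * t) hts).symm
      have hone : s = 1 := hsharp s (IsUnit.of_mul_eq_one (a := s) t hst)
      rw [hone, mul_one] at hs
      rw [← hs]
      exact Localization.mk_self b
  haveI : AddGroup.FG (Additive (GC C)) := by
    haveI := hGfg
    infer_instance
  haveI : Module.Finite ℤ (Additive (GC C)) := Module.Finite.iff_addGroup_fg.mpr ‹_›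
  haveI : NoZeroSMulDivisors ℤ (Additive (GC C)) := by
    constructor
    intro n x hnx
    by_cases hn : n = 0
    · exact Or.inl hn
    · right
      have hx : (Additive.toMul x) ^ n = 1 := by
        have := congrArg Additive.toMul hnx
        rwa [toMul_zsmul] at this
      have hxm : (Additive.toMul x) ^ n.natAbs = 1 := by
        rcases Int.natAbs_eq n with h | h
        · rw [← zpow_natCast, ← h, hx]
        · rw [← zpow_natCast]
          have h2 : (Additive.toMul x) ^ (-(n.natAbs : ℤ)) = 1 := by rw [← h, hx]
          rw [zpow_neg, inv_eq_one] at h2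
          exact h2
      have := htf (Additive.toMul x) n.natAbs (Int.natAbs_pos.mpr hn) hxm
      exact Additive.toMul.injective this
  haveI : Module.Free ℤ (Additive (GC C)) := Module.free_of_finite_type_torsion_free'
  haveI : Module.Projective ℤ (Additive (GC C)) := inferInstance
  set Φₗ : Additive (GC Q) →ₗ[ℤ] Additive (GC C) :=
    (MonoidHom.toAdditive Φ).toIntLinearMap with hΦₗ
  have hΦₗsurj : Function.Surjective Φₗ := hΦsurj
  obtain ⟨sₗ, hsₗ⟩ := Module.projective_lifting_property Φₗ LinearMap.id hΦₗsurj
  set sₘ : GC C →* GC Q := MonoidHom.toAdditive.symm sₗ.toAddMonoidHom with hsₘ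
  have hsec : ∀ h : GC C, Φ (sₘ h) = h := fun h => LinearMap.ext_iff.mp hsₗ h
  have key : ∀ c : C, ∃ x : Q, gcI Q x = sₘ (gcI C c) := by
    intro c
    obtain ⟨y, hy⟩ := hπsurj c
    have h1 : Φ (sₘ (gcI C c) * (gcI Q y)⁻¹) = 1 := by
      rw [map_mul, show Φ (gcI Q y)⁻¹ = (Φ (gcI Q y))⁻¹ from map_inv Φ _, hsec, hΦι, hy]
      exact mul_inv_cancel _
    obtain ⟨u, hu⟩ := hker _ h1
    refine ⟨(u : Q) * y, ?_⟩
    have h2 : sₘ (gcI C c) = gcI Q (u : Q) * gcI Q y := by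
      rw [← hu]; exact (inv_mul_cancel_right _ _).symm
    rw [map_mul, h2]
  choose σ hσ using key
  have hinjQ : Function.Injective (gcI Q) := gcI_injective hint
  have hinjC : Function.Injective (gcI C) := gcI_injective hintC
  refine ⟨{ toFun := σ, map_one' := ?_, map_mul' := ?_ }, ?_⟩
  · apply hinjQ
    rw [hσ, map_one, map_one, map_one]
  · intro c d
    apply hinjQ
    rw [map_mul, hσ, hσ, hσ, map_mul, map_mul]
  · refine MonoidHom.ext fun c => ?_
    show π (σ c) = c
    apply hinjC
    rw [← hΦι, hσ, hsec]
end

section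
/- Let (R,Q,α) be a prelog ring such that Q is integral and its sharpification Q̄ is fine and saturated, and let s: Q̄ → Q be a section of the canonical surjection π: Q → Q̄. Then for every R-module M, the map FDer_{(R,Q,α)}(M) → FDer_{(R,Q̄,α∘s)}(M), (D,δ) ↦ (D, δ∘s), is an isomorphism; consequently FΩ_{(R,Q̄,αs)} ≅ FΩ_{(R,Q,α)}. -/
open scoped TensorProduct

/-- for a section `s : Q̄ → Q` of the sharpification, composing with `s`
gives a bijection between log FW-derivations of `(R,Q,α)` and of `(R,Q̄,αs)`. -/
theorem stmt14 (p : ℕ) (hp : p.Prime) {R Q : Type*} [CommRing R] [CommMonoid Q]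
    (α : Q →* R) (hint : IsIntegralMon Q)
    (hfg : Monoid.FG (sharpCon Q).Quotient) (hsat : IsSaturatedMon (sharpCon Q).Quotient)
    (s : (sharpCon Q).Quotient →* Q)
    (hs : ((sharpCon Q).mk').comp s = MonoidHom.id (sharpCon Q).Quotient)
    {M : Type*} [AddCommGroup M] [Module R M] :
    (∀ (D : R → M) (δ : Q → M), IsLogFWDerivation p α D δ →
      IsLogFWDerivation p (α.comp s) D (fun q => δ (s q))) ∧
    ∀ (D : R → M) (δ' : (sharpCon Q).Quotient → M),
      IsLogFWDerivation p (α.comp s) D δ' →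
        ∃! δ : Q → M, IsLogFWDerivation p α D δ ∧ ∀ q, δ (s q) = δ' q := by
  classical
  have hsq : ∀ q, (sharpCon Q).mk' (s q) = q := fun q => DFunLike.congr_fun hs q
  constructor
  · rintro D δ ⟨hFW, h1, hmul, hcomp⟩
    refine ⟨hFW, by simp [map_one s, h1], fun x y => by simp [map_mul s, hmul], fun x => ?_⟩
    simpa using hcomp (s x)
  · rintro D δ' ⟨hFW, h1', hmul', hcomp'⟩
    have hD1 : D (1 : R) = 0 := by
      have h := hFW.map_mul' 1 1
      simp only [one_mul, one_pow, one_smul] at h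
      exact (left_eq_add.mp h)
    have hrel : ∀ x : Q, ∃ u : Qˣ, x = s ((sharpCon Q).mk' x) * u := by
      intro x
      have h : (sharpCon Q).mk' (s ((sharpCon Q).mk' x)) = (sharpCon Q).mk' x := hsq _
      have h2 : (sharpCon Q) (s ((sharpCon Q).mk' x)) x := ((sharpCon Q).eq).mp h
      obtain ⟨u, hu⟩ := h2
      exact ⟨u⁻¹, by rw [hu, mul_assoc]; simp⟩
    choose u hu using hrel
    -- uniqueness of the unit value
    have huniq : ∀ (x : Q) (v : Qˣ), x = s ((sharpCon Q).mk' x) * v → (v : Q) = u x := by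
      intro x v hv
      apply hint (s ((sharpCon Q).mk' x))
      rw [← hv, ← hu x]
    set U : Q → Rˣ := fun x => Units.map α (u x) with hU
    have hUval : ∀ x, (U x : R) = α (u x) := fun x => rfl
    set δ : Q → M := fun x => (((U x)⁻¹ : Rˣ) : R) ^ p • D (α (u x)) + δ' ((sharpCon Q).mk' x)
      with hδ
    -- δ of units: the key identity
    have hαx : ∀ x : Q, α x = α (s ((sharpCon Q).mk' x)) * α (u x) := by
      intro x; conv_lhs => rw [hu x]
      rw [map_mul]
    have hu1 : ∀ q, ((u (s q) : Q)) = 1 := by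
      intro q
      have : s q = s ((sharpCon Q).mk' (s q)) * (1 : Qˣ) := by rw [hsq]; simp
      exact (huniq (s q) 1 this).symm
    have hδs : ∀ q, δ (s q) = δ' q := by
      intro q
      simp only [hδ]
      rw [show α (u (s q)) = 1 by rw [hu1 q, map_one], hD1, smul_zero, zero_add, hsq]
    have humul : ∀ x y : Q, u (x * y) = u x * u y := by
      intro x y
      ext
      refine (huniq (x * y) (u x * u y) ?_).symm
      rw [map_mul, map_mul, Units.val_mul]
      conv_lhs => rw [hu x, hu y]
      exact mul_mul_mul_comm _ _ _ _
    have hUmul : ∀ x y : Q, U (x * y) = U x * U y := by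
      intro x y; simp only [hU, humul, map_mul]
    refine ⟨δ, ⟨⟨hFW, ?_, ?_, ?_⟩, hδs⟩, ?_⟩
    · -- δ 1 = 0
      have := hδs 1
      rwa [map_one s, h1'] at this
    · -- additivity
      intro x y
      have hα2 : α ↑(u (x * y)) = α ↑(u x) * α ↑(u y) := by
        rw [humul, Units.val_mul, map_mul]
      simp only [hδ, hUmul, map_mul, mul_inv, Units.val_mul, hα2]
      rw [hmul']
      have hD : D (α (u x) * α (u y)) = α (u y) ^ p • D (α (u x)) + α (u x) ^ p • D (α (u y)) :=
        hFW.map_mul' _ _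
      rw [hD, smul_add, mul_pow, smul_smul, smul_smul]
      have e1 : ((↑(U x)⁻¹ : R)) ^ p * ((↑(U y)⁻¹ : R)) ^ p * α ↑(u y) ^ p
          = ((↑(U x)⁻¹ : R)) ^ p := by
        rw [mul_assoc, ← mul_pow, ← hUval, Units.inv_mul, one_pow, mul_one]
      have e2 : ((↑(U x)⁻¹ : R)) ^ p * ((↑(U y)⁻¹ : R)) ^ p * α ↑(u x) ^ p
          = ((↑(U y)⁻¹ : R)) ^ p := by
        rw [mul_right_comm, ← mul_pow, ← hUval, Units.inv_mul, one_pow, one_mul]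
      rw [e1, e2]
      abel
    · -- compatibility
      intro x
      have hc' : D (α (s ((sharpCon Q).mk' x))) =
          α (s ((sharpCon Q).mk' x)) ^ p • δ' ((sharpCon Q).mk' x) := by
        simpa using hcomp' ((sharpCon Q).mk' x)
      have hone : α ↑(u x) ^ p * (((U x)⁻¹ : Rˣ) : R) ^ p = 1 := by
        rw [← mul_pow, ← hUval, Units.mul_inv, one_pow]
      rw [hαx x, hFW.map_mul', hc', hδ]
      simp only
      rw [smul_add, mul_pow, smul_smul, smul_smul,
        mul_assoc (α (s ((sharpCon Q).mk' x)) ^ p), hone, mul_one,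
        mul_comm (α ↑(u x) ^ p)]
      exact add_comm _ _
    · -- uniqueness
      rintro δ₂ ⟨⟨hFW₂, h1₂, hmul₂, hcomp₂⟩, hδ₂s⟩
      funext x
      have hx : δ₂ x = δ₂ (s ((sharpCon Q).mk' x)) + δ₂ ((u x : Q)) := by
        conv_lhs => rw [hu x]
        exact hmul₂ _ _
      have hunit : δ₂ ((u x : Q)) = (((U x)⁻¹ : Rˣ) : R) ^ p • D (α (u x)) := by
        have hc := hcomp₂ ((u x : Q))
        rw [hc, smul_smul, ← mul_pow, ← hUval, Units.inv_mul, one_pow, one_smul]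
      rw [hx, hδ₂s, hunit, hδ, add_comm]
end
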